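/- Let k be a commutative ring which is a ℚ-algebra, A an associative unital k-algebra, and λ ∈ k. The map γ : A^ℕ → A^ℕ defined by γ(a)_n = Σ_{m=0}^{n} (n choose m)·λ^m·a_m is a k-algebra morphism from (A^ℕ, ·^λ) to A^ℕ with the pointwise product: it is k-linear, sends J = (1,0,0,…) to the constant sequence 1, and satisfies γ(a ·^λ b)_n = γ(a)_n·γ(b)_n for all n. Moreover, if λ is invertible in k, then γ is bijective, hence a k-algebra isomorphism. -/

import Mathlib

/-- The `lam`-weighted Hurwitz product on sequences:
`(a ·^lam b)_n = ∑_{r+s+t=n} (n!/(r!·s!·t!)) · lam^t · a_{r+t} · b_{s+t}`,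
the sum ranging over triples `(r,s,t)` with `r+s+t = n`, enumerated as
`r = x.1`, `s = y.1`, `t = y.2`. -/
noncomputable def hur {k A : Type*} [CommRing k] [Ring A] [Algebra k A]
    (lam : k) (a b : ℕ → A) : ℕ → A := fun n =>
  ∑ x ∈ Finset.HasAntidiagonal.antidiagonal n, ∑ y ∈ Finset.HasAntidiagonal.antidiagonal x.2,
    (n.factorial / (x.1.factorial * y.1.factorial * y.2.factorial)) •
      (lam ^ y.2 • (a (x.1 + y.2) * b (y.1 + y.2)))

/-- The sequence `J = (1,0,0,…)`, the unit for the weighted Hurwitz products. -/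
def Jseq (A : Type*) [One A] [Zero A] : ℕ → A := fun n => if n = 0 then 1 else 0

/-- The map `γ(a)_n = ∑_{m=0}^{n} (n choose m) · λ^m · a_m`. -/
noncomputable def gam {k A : Type*} [CommRing k] [Ring A] [Algebra k A]
    (lam : k) (a : ℕ → A) : ℕ → A := fun n =>
  ∑ m ∈ Finset.range (n + 1), n.choose m • (lam ^ m • a m)

open Finset

/-- Regrouping a triangular double sum. -/
lemma helper1 {M : Type*} [AddCommMonoid M] (n : ℕ) (f : ℕ → ℕ → M) :
    ∑ i ∈ range (n+1), ∑ p ∈ antidiagonal i, f p.1 p.2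
      = ∑ q ∈ range (n+1), ∑ r ∈ range (n+1-q), f r q := by
  rw [Finset.sum_sigma' (range (n+1)) (fun i => antidiagonal i),
    Finset.sum_sigma' (range (n+1)) (fun q => range (n+1-q))]
  refine Finset.sum_nbij' (fun x => ⟨x.2.2, x.2.1⟩) (fun x => ⟨x.2 + x.1, (x.2, x.1)⟩) ?_ ?_ ?_ ?_ ?_
  · rintro ⟨i, r, q⟩ h
    simp only [mem_sigma, mem_range, HasAntidiagonal.mem_antidiagonal] at h ⊢
    omega
  · rintro ⟨q, r⟩ h
    simp only [mem_sigma, mem_range, HasAntidiagonal.mem_antidiagonal] at h ⊢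
    exact ⟨by omega, trivial⟩
  · rintro ⟨i, r, q⟩ h
    simp only [mem_sigma, mem_range, HasAntidiagonal.mem_antidiagonal] at h
    simp [h.2]
  · rintro ⟨q, r⟩ _; rfl
  · rintro ⟨i, r, q⟩ _; rfl

lemma choose_div_eq (m r q s t : ℕ) (h1 : r + q = m) (h2 : s + t = q) :
    m.factorial / (r.factorial * s.factorial * t.factorial)
      = m.choose q * q.choose t := by
  have e1 : m.choose q * q.factorial * r.factorial = m.factorial := by
    have h := Nat.choose_mul_factorial_mul_factorial (show q ≤ m by omega)
    rwa [show m - q = r by omega] at h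
  have e2 : q.choose t * t.factorial * s.factorial = q.factorial := by
    have h := Nat.choose_mul_factorial_mul_factorial (show t ≤ q by omega)
    rwa [show q - t = s by omega] at h
  have key : m.factorial
      = (m.choose q * q.choose t) * (r.factorial * s.factorial * t.factorial) := by
    rw [← e1, ← e2]; ring
  rw [key, Nat.mul_div_cancel]
  exact Nat.mul_pos (Nat.mul_pos r.factorial_pos s.factorial_pos) t.factorial_pos

section Main
variable {k A : Type*} [CommRing k] [Ring A] [Algebra k A]

lemma nest_smul (N M : ℕ) (c d : k) (z : A) :
    N • (c • (M • (d • z))) = (N * M) • ((c * d) • z) := by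
  rw [smul_comm c M, smul_smul c d, smul_smul N M]

lemma prodSmul (N1 N2 : ℕ) (c1 c2 : k) (u v : A) :
    (N1 • (c1 • u)) * (N2 • (c2 • v)) = (N1 * N2) • ((c1 * c2) • (u * v)) := by
  rw [smul_mul_smul_comm, smul_mul_smul_comm]

/-- `gam` as a rectangular sum (Vandermonde). -/
lemma gam_eq_rect (lam : k) (a : ℕ → A) (n q : ℕ) (hq : q ≤ n) :
    gam lam a n = ∑ r ∈ range (n+1-q), ∑ t ∈ range (q+1),
      ((n-q).choose r * q.choose t) • (lam ^ (r+t) • a (r+t)) := by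
  set F : ℕ → ℕ → A := fun r t => ((n-q).choose r * q.choose t) • (lam ^ (r+t) • a (r+t))
    with hF
  have hvanish : ∀ r t, (n - q < r ∨ q < t) → F r t = 0 := by
    intro r t h
    have h0 : (n-q).choose r * q.choose t = 0 := by
      rcases h with h' | h'
      · rw [Nat.choose_eq_zero_of_lt h', zero_mul]
      · rw [Nat.choose_eq_zero_of_lt h', mul_zero]
    simp only [hF]
    rw [h0, zero_smul]
  have step1 : gam lam a n = ∑ i ∈ range (n+1), ∑ p ∈ antidiagonal i, F p.1 p.2 := by
    unfold gam
    refine Finset.sum_congr rfl fun i _ => ?_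
    have hvdm : n.choose i = ∑ p ∈ antidiagonal i, (n-q).choose p.1 * q.choose p.2 := by
      rw [← Nat.add_choose_eq, show n - q + q = n by omega]
    rw [hvdm, Finset.sum_smul]
    refine Finset.sum_congr rfl fun p hp => ?_
    rw [hF]
    simp only []
    rw [mem_antidiagonal.mp hp]
  have step2 : gam lam a n = ∑ t ∈ range (n+1), ∑ r ∈ range (n+1-t), F r t := by
    rw [step1, helper1]
  have square : ∀ t ∈ range (n+1), ∑ r ∈ range (n+1-t), F r t = ∑ r ∈ range (n+1), F r t := by
    intro t ht
    refine Finset.sum_subset (Finset.range_subset_range.mpr (by omega)) fun r hr hr' => ?_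
    simp only [mem_range] at hr hr' ht
    exact hvanish r t (by omega)
  have step3 : gam lam a n = ∑ t ∈ range (n+1), ∑ r ∈ range (n+1), F r t := by
    rw [step2]; exact Finset.sum_congr rfl square
  have square2 : ∀ r, ∑ t ∈ range (q+1), F r t = ∑ t ∈ range (n+1), F r t := by
    intro r
    refine Finset.sum_subset (Finset.range_subset_range.mpr (by omega)) fun t ht ht' => ?_
    simp only [mem_range] at ht ht'
    exact hvanish r t (Or.inr (by omega))
  have square3 : ∑ r ∈ range (n+1-q), ∑ t ∈ range (n+1), F r t
      = ∑ r ∈ range (n+1), ∑ t ∈ range (n+1), F r t := by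
    refine Finset.sum_subset (Finset.range_subset_range.mpr (by omega)) fun r hr hr' => ?_
    refine Finset.sum_eq_zero fun t _ => ?_
    simp only [mem_range] at hr hr'
    exact hvanish r t (Or.inl (by omega))
  rw [step3, Finset.sum_comm, ← square3]
  exact Finset.sum_congr rfl fun r _ => (square2 r).symm

lemma gam_hur (lam : k) (a b : ℕ → A) (n : ℕ) :
    gam lam (hur lam a b) n = gam lam a n * gam lam b n := by
  have stepA : gam lam (hur lam a b) n =
      ∑ m ∈ range (n+1), ∑ x ∈ antidiagonal m, ∑ y ∈ antidiagonal x.2,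
        ((((n - x.2).choose x.1 * x.2.choose y.2) • (lam ^ (x.1 + y.2) • a (x.1 + y.2))) *
          (n.choose x.2 • (lam ^ x.2 • b x.2))) := by
    unfold gam hur
    refine Finset.sum_congr rfl fun m hm => ?_
    have hmn : m ≤ n := by simp only [mem_range] at hm; omega
    simp only [Finset.smul_sum]
    refine Finset.sum_congr rfl fun x hx => Finset.sum_congr rfl fun y hy => ?_
    have h1 : x.1 + x.2 = m := mem_antidiagonal.mp hx
    have h2 : y.1 + y.2 = x.2 := mem_antidiagonal.mp hy
    rw [choose_div_eq m x.1 x.2 y.1 y.2 h1 h2, nest_smul, prodSmul, ← pow_add, ← pow_add,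
      show y.1 + y.2 = x.2 from h2, show m + y.2 = x.1 + y.2 + x.2 by omega]
    have hc := Nat.choose_mul (n := n) (k := m) (s := x.2) (by omega)
    rw [show m - x.2 = x.1 by omega] at hc
    rw [show n.choose m * (m.choose x.2 * x.2.choose y.2)
        = (n - x.2).choose x.1 * x.2.choose y.2 * n.choose x.2 by
      rw [← mul_assoc, hc]; ring]
  calc gam lam (hur lam a b) n
      = ∑ m ∈ range (n+1), ∑ x ∈ antidiagonal m, ∑ y ∈ antidiagonal x.2,
        ((((n - x.2).choose x.1 * x.2.choose y.2) • (lam ^ (x.1 + y.2) • a (x.1 + y.2))) *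
          (n.choose x.2 • (lam ^ x.2 • b x.2))) := stepA
    _ = ∑ q ∈ range (n+1), ∑ r ∈ range (n+1-q), ∑ y ∈ antidiagonal q,
        ((((n - q).choose r * q.choose y.2) • (lam ^ (r + y.2) • a (r + y.2))) *
          (n.choose q • (lam ^ q • b q))) :=
        helper1 n (fun r q => ∑ y ∈ antidiagonal q,
          ((((n - q).choose r * q.choose y.2) • (lam ^ (r + y.2) • a (r + y.2))) *
            (n.choose q • (lam ^ q • b q))))
    _ = ∑ q ∈ range (n+1), (gam lam a n) * (n.choose q • (lam ^ q • b q)) := by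
        refine Finset.sum_congr rfl fun q hq => ?_
        have hqn : q ≤ n := by simp only [mem_range] at hq; omega
        have fact : ∀ r : ℕ, ∑ y ∈ antidiagonal q,
            ((((n - q).choose r * q.choose y.2) • (lam ^ (r + y.2) • a (r + y.2))) *
              (n.choose q • (lam ^ q • b q)))
            = (∑ y ∈ antidiagonal q,
                ((n - q).choose r * q.choose y.2) • (lam ^ (r + y.2) • a (r + y.2))) *
              (n.choose q • (lam ^ q • b q)) := fun r => (Finset.sum_mul _ _ _).symm
        simp only [fact, ← Finset.sum_mul]
        congr 1
        have swap : ∀ r : ℕ, (∑ y ∈ antidiagonal q,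
            ((n - q).choose r * q.choose y.2) • (lam ^ (r + y.2) • a (r + y.2)))
            = ∑ t ∈ range (q+1),
            ((n - q).choose r * q.choose t) • (lam ^ (r + t) • a (r + t)) := by
          intro r
          have e1 : (∑ y ∈ antidiagonal q,
              ((n - q).choose r * q.choose y.2) • (lam ^ (r + y.2) • a (r + y.2)))
              = ∑ y ∈ antidiagonal q,
              ((n - q).choose r * q.choose y.1) • (lam ^ (r + y.1) • a (r + y.1)) :=
            Finset.Nat.sum_antidiagonal_swap (n := q)
              (f := fun p => ((n - q).choose r * q.choose p.1) •
                (lam ^ (r + p.1) • a (r + p.1)))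
          rw [e1]
          exact Finset.Nat.sum_antidiagonal_eq_sum_range_succ
            (fun u _ => ((n - q).choose r * q.choose u) • (lam ^ (r + u) • a (r + u))) q
        simp only [swap]
        exact (gam_eq_rect lam a n q hqn).symm
    _ = gam lam a n * gam lam b n := by rw [← Finset.mul_sum]; rfl

/-- Inverse of `gam` by strong recursion. -/
noncomputable def ginv (mu lam : k) (c : ℕ → A) : ℕ → A
  | n => mu ^ n • (c n - ∑ m ∈ (Finset.range n).attach,
      n.choose m.1 • (lam ^ m.1 • ginv mu lam c m.1))
  decreasing_by exact Finset.mem_range.mp m.2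

lemma gam_ginv (mu lam : k) (h : lam * mu = 1) (c : ℕ → A) :
    gam lam (ginv mu lam c) = c := by
  funext n
  have hrec : ginv mu lam c n = mu ^ n • (c n - ∑ m ∈ Finset.range n,
      n.choose m • (lam ^ m • ginv mu lam c m)) := by
    rw [ginv]
    congr 1
    congr 1
    rw [← Finset.sum_attach (range n) (fun m => n.choose m • (lam ^ m • ginv mu lam c m))]
  have hone : ∀ x : A, lam ^ n • mu ^ n • x = x := by
    intro x
    rw [smul_smul, ← mul_pow, h, one_pow, one_smul]
  rw [gam]
  rw [Finset.sum_range_succ, Nat.choose_self, one_smul, hrec, hone]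
  abel

lemma ginv_gam (mu lam : k) (h : lam * mu = 1) (a : ℕ → A) :
    ginv mu lam (gam lam a) = a := by
  funext n
  induction n using Nat.strong_induction_on with
  | _ n ih =>
    rw [ginv]
    rw [show (∑ m ∈ (Finset.range n).attach,
        n.choose m.1 • (lam ^ m.1 • ginv mu lam (gam lam a) m.1))
        = ∑ m ∈ Finset.range n, n.choose m • (lam ^ m • a m) from ?_]
    · rw [show gam lam a n = (∑ m ∈ Finset.range n, n.choose m • (lam ^ m • a m))
          + lam ^ n • a n from ?_]
      · rw [add_sub_cancel_left, smul_smul, ← mul_pow, mul_comm mu lam, h, one_pow, one_smul]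
      · rw [gam, Finset.sum_range_succ, Nat.choose_self, one_smul]
    · rw [← Finset.sum_attach (range n) (fun m => n.choose m • (lam ^ m • a m))]
      exact Finset.sum_congr rfl fun m _ => by rw [ih m.1 (Finset.mem_range.mp m.2)]

end Main

/-- `γ` is a `k`-algebra morphism from `(A^ℕ, ·^λ)` to `A^ℕ` with the
pointwise product: it is `k`-linear, sends `J` to the constant sequence `1`, and is
multiplicative.  Moreover, if `λ` is invertible in `k`, then `γ` is bijective, hence a
`k`-algebra isomorphism. -/
theorem stmt6 {k A : Type*} [CommRing k] [Algebra ℚ k] [Ring A] [Algebra k A] (lam : k) :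
    (∀ a b : ℕ → A, gam lam (a + b) = gam lam a + gam lam b) ∧
    (∀ (r : k) (a : ℕ → A), gam lam (r • a) = r • gam lam a) ∧
    (gam lam (Jseq A) = fun _ => (1 : A)) ∧
    (∀ a b : ℕ → A, ∀ n, gam lam (hur lam a b) n = gam lam a n * gam lam b n) ∧
    (IsUnit lam → Function.Bijective (gam (A := A) lam)) := by
  refine ⟨?_, ?_, ?_, fun a b n => gam_hur lam a b n, ?_⟩
  · intro a b
    funext n
    simp [gam, smul_add, Finset.sum_add_distrib]
  · intro r a
    funext n
    simp only [gam, Pi.smul_apply]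
    rw [Finset.smul_sum]
    refine Finset.sum_congr rfl fun m _ => ?_
    rw [smul_comm r, smul_comm r]
  · funext n
    rw [gam]
    rw [Finset.sum_eq_single 0]
    · simp [Jseq]
    · intro m _ hm
      simp [Jseq, hm]
    · intro h
      exact absurd (Finset.mem_range.mpr (by omega)) h
  · rintro ⟨u, rfl⟩
    have hmul : (↑u : k) * ↑u⁻¹ = 1 := u.mul_inv
    refine ⟨fun a b hab => ?_, fun c =>
      ⟨ginv ((↑u⁻¹ : k)) ((↑u : k)) c, gam_ginv ((↑u⁻¹ : k)) ((↑u : k)) hmul c⟩⟩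
    have h1 := ginv_gam (A := A) ((↑u⁻¹ : k)) ((↑u : k)) hmul a
    have h2 := ginv_gam (A := A) ((↑u⁻¹ : k)) ((↑u : k)) hmul b
    rw [← h1, ← h2, hab]
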